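/- Let b = Σ_{i=1}^d b^i e_i be a linear combination of single letters. Then the shuffle exponential exp^{⧢}(b) = Σ_{n≥0} b^{⊗n} has finite A_h-norm: Σ_v |⟨exp^{⧢}(b), v⟩| h_T(v) < ∞, where h_T(v) = C(n(v)+1)^{-1/4}(2T)^{(n(v)+x(v))/2}/√((n(v)+x(v)-1)!). In particular, for d=2 and b = a·e_1 + c·e_2, the double series Σ_{m,k≥0} (k+m)!/(k!m!) · |a|^k |c|^m · C(k+m+1)^{-1/4}(2T)^{k+m/2}/√((2k+m-1)!) converges. -/

import Mathlib

open scoped BigOperators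

/-- Words over the alphabet `Fin d`. -/
abbrev Word (d : ℕ) := List (Fin d)

/-- The extended tensor algebra over `ℝ^d`, viewed as coefficient functions on words. -/
abbrev ETA (d : ℕ) := Word d → ℝ

namespace ETA

variable {d : ℕ}

/-- The unit (empty word) element `∅`. -/
noncomputable def unit (d : ℕ) : ETA d := fun v => if v = [] then 1 else 0

/-- Concatenation (tensor) product. -/
noncomputable def concat (p q : ETA d) : ETA d :=
  fun v => ∑ k ∈ Finset.range (v.length + 1), p (v.take k) * q (v.drop k)

/-- Concatenation powers. -/
noncomputable def cpow (p : ETA d) : ℕ → ETA d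
  | 0 => unit d
  | n + 1 => concat (cpow p n) p

/-- Shuffle product of two words as a multiset of words. -/
def shuffleW {A : Type*} : List A → List A → Multiset (List A)
  | [], w => {w}
  | u, [] => {u}
  | a :: u, b :: w =>
      (shuffleW u (b :: w)).map (a :: ·) + (shuffleW (a :: u) w).map (b :: ·)
  termination_by u w => u.length + w.length
  decreasing_by all_goals (simp only [List.length_cons]; omega)

/-- The finset of all words of length `n` over `Fin d`. -/
noncomputable def wordsLen (d n : ℕ) : Finset (Word d) :=
  Finset.image (fun f : Fin n → Fin d => List.ofFn f) Finset.univ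

/-- Shuffle product on the extended tensor algebra (coefficient-wise finite sums). -/
noncomputable def shuffle (p q : ETA d) : ETA d :=
  fun v => ∑ k ∈ Finset.range (v.length + 1),
    ∑ u ∈ wordsLen d k, ∑ w ∈ wordsLen d (v.length - k),
      p u * q w * ((shuffleW u w).count v : ℝ)

/-- Shuffle powers. -/
noncomputable def spow (p : ETA d) : ℕ → ETA d
  | 0 => unit d
  | n + 1 => shuffle (spow p n) p

/-- A linear combination of single letters `Σ_i c i • e_i`. -/
def letters (c : Fin d → ℝ) : ETA d := fun v =>
  match v with
  | [i] => c i
  | _ => 0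

/-- A single letter `e_i`. -/
noncomputable def letter (i : Fin d) : ETA d := fun v => if v = [i] then 1 else 0

/-- The resolvent `(∅ - q)⁻¹ = Σ_n q^{⊗n}`, defined coefficient-wise. -/
noncomputable def res (q : ETA d) : ETA d := fun v => ∑' n, cpow q n v

/-- The shuffle exponential `exp^⧢(b) = Σ_n b^{⧢n}/n!`, defined coefficient-wise. -/
noncomputable def shuexp (b : ETA d) : ETA d := fun v => ∑' n, spow b n v / (Nat.factorial n : ℝ)

/-- Right projection `ℓ|_i`, removing a terminal letter `i`. -/
def proj (p : ETA d) (i : Fin d) : ETA d := fun v => p (v ++ [i])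


lemma shuffleW_cons_single {A : Type*} (c i : A) (u : List A) : shuffleW (c::u) [i]
    = (shuffleW u [i]).map (c :: ·) + {i :: c :: u} := by
  rw [shuffleW, shuffleW] <;> simp

lemma shuffleW_nil_single {A : Type*} (i : A) : shuffleW ([] : List A) [i] = {[i]} := by
  rw [shuffleW]

lemma count_shuffleW_single {A : Type*} [DecidableEq A] (a c i : A) (v u : List A) :
    (shuffleW (c::u) [i]).count (a::v)
    = (if a = c then (shuffleW u [i]).count v else 0)
      + (if a = i ∧ v = c :: u then 1 else 0) := by
  rw [shuffleW_cons_single, Multiset.count_add]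
  congr 1
  · by_cases h : a = c
    · subst h
      rw [Multiset.count_map_eq_count' _ _ (fun x y hxy => by simpa using hxy), if_pos rfl]
    · rw [if_neg h, Multiset.count_eq_zero]
      intro hm
      obtain ⟨w, -, hw⟩ := Multiset.mem_map.1 hm
      exact h (by simpa using (List.cons.injEq _ _ _ _ ▸ hw).1.symm)
  · rw [Multiset.count_singleton]
    by_cases h : a = i ∧ v = c :: u
    · rw [if_pos h, if_pos (by simp [h.1, h.2])]
    · rw [if_neg h, if_neg (by simp; intro h1 h2; exact h ⟨h1, h2⟩)]

lemma mem_wordsLen {u : Word d} {n : ℕ} : u ∈ wordsLen d n ↔ u.length = n := by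
  constructor
  · intro hu
    obtain ⟨f, -, rfl⟩ := Finset.mem_image.1 hu
    simp
  · rintro rfl
    exact Finset.mem_image.2 ⟨u.get, Finset.mem_univ _, List.ofFn_get u⟩

lemma sum_wordsLen {M : Type*} [AddCommMonoid M] (n : ℕ) (g : Word d → M) :
    ∑ u ∈ wordsLen d n, g u = ∑ f : Fin n → Fin d, g (List.ofFn f) := by
  rw [wordsLen, Finset.sum_image]
  intro f _ g' _ h
  exact List.ofFn_inj.1 h

lemma sum_wordsLen_succ {M : Type*} [AddCommMonoid M] (n : ℕ) (g : Word d → M) :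
    ∑ u ∈ wordsLen d (n+1), g u = ∑ c : Fin d, ∑ u ∈ wordsLen d n, g (c :: u) := by
  rw [sum_wordsLen]
  rw [← (Fin.consEquiv (fun _ : Fin (n+1) => Fin d)).sum_comp (fun f => g (List.ofFn f))]
  rw [Fintype.sum_prod_type]
  refine Finset.sum_congr rfl fun c _ => ?_
  rw [sum_wordsLen]
  refine Finset.sum_congr rfl fun f _ => ?_
  congr 1
  simp [Fin.consEquiv, List.ofFn_succ]

lemma sum_wordsLen_zero {M : Type*} [AddCommMonoid M] (g : Word d → M) :
    ∑ u ∈ wordsLen d 0, g u = g [] := by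
  rw [sum_wordsLen]
  rw [Fintype.sum_unique (fun f : Fin 0 → Fin d => g (List.ofFn f))]
  congr 1

lemma sum_wordsLen_one {M : Type*} [AddCommMonoid M] (g : Word d → M) :
    ∑ u ∈ wordsLen d 1, g u = ∑ i : Fin d, g [i] := by
  rw [sum_wordsLen]
  refine Fintype.sum_equiv (Equiv.funUnique (Fin 1) (Fin d)) _ _ fun f => ?_
  congr 1

lemma key_sum (b : Fin d → ℝ) : ∀ (v : Word d) (n : ℕ), v.length = n + 1 →
    ∑ u ∈ wordsLen d n, ∑ i : Fin d,
        ((u.map b).prod * b i * ((shuffleW u [i]).count v : ℝ))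
      = ((n : ℝ) + 1) * ((v.map b).prod) := by
  intro v
  induction v with
  | nil => intro n h; simp at h
  | cons a v' ih =>
    intro n h
    have hv' : v'.length = n := by simpa using h
    match n, hv' with
    | 0, hv' =>
      have : v' = [] := List.length_eq_zero_iff.1 hv'
      subst this
      rw [sum_wordsLen_zero]
      simp only [shuffleW_nil_single, Multiset.count_singleton]
      simp [List.cons.injEq, Finset.sum_ite_eq]
    | (m+1), hv' =>
      obtain ⟨c0, t0, rfl⟩ : ∃ c0 t0, v' = c0 :: t0 := by
        cases v' with
        | nil => simp at hv'
        | cons x y => exact ⟨x, y, rfl⟩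
      have ht0 : t0.length = m := by simpa using hv'
      rw [sum_wordsLen_succ]
      simp only [count_shuffleW_single, List.map_cons, List.prod_cons]
      push_cast
      simp only [mul_add]
      rw [Finset.sum_congr rfl fun c _ => Finset.sum_congr rfl fun u' _ =>
        (Finset.sum_add_distrib)]
      rw [Finset.sum_congr rfl fun c _ => Finset.sum_add_distrib, Finset.sum_add_distrib]
      have hS1 : ∑ c : Fin d, ∑ u' ∈ wordsLen d m, ∑ i : Fin d,
          b c * (u'.map b).prod * b i * (if a = c then ((shuffleW u' [i]).count (c0 :: t0) : ℝ) else 0)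
          = b a * (((m : ℝ) + 1) * (((c0 :: t0).map b).prod)) := by
        simp only [mul_ite, mul_zero, Finset.sum_ite_irrel, Finset.sum_const_zero,
          Finset.sum_ite_eq, Finset.mem_univ, if_true]
        rw [← ih m (by simpa using hv'), Finset.mul_sum]
        refine Finset.sum_congr rfl fun u' _ => ?_
        rw [Finset.mul_sum]
        refine Finset.sum_congr rfl fun i _ => by ring
      have hS2 : ∑ c : Fin d, ∑ u' ∈ wordsLen d m, ∑ i : Fin d,
          b c * (u'.map b).prod * b i * (if a = i ∧ c0 :: t0 = c :: u' then (1:ℝ) else 0)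
          = b a * (((c0 :: t0).map b).prod) := by
        simp only [List.cons.injEq, ite_and, mul_ite, mul_one, mul_zero,
          Finset.sum_ite_irrel, Finset.sum_const_zero, Finset.sum_ite_eq,
          Finset.mem_univ, if_true]
        rw [if_pos (mem_wordsLen.2 ht0)]
        simp only [List.map_cons, List.prod_cons]
        ring
      rw [hS1, hS2]
      simp only [List.map_cons, List.prod_cons]
      ring


lemma letters_eq_zero (b : Fin d → ℝ) {v : Word d} (h : v.length ≠ 1) :
    letters b v = 0 := by
  match v with
  | [] => rfl
  | [i] => simp at h
  | (i :: j :: t) => rfl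

lemma letters_single (b : Fin d → ℝ) (i : Fin d) : letters b [i] = b i := rfl

lemma spow_eq_zero (b : Fin d → ℝ) : ∀ (n : ℕ) (v : Word d), v.length ≠ n →
    spow (letters b) n v = 0 := by
  intro n
  induction n with
  | zero =>
    intro v hv
    rw [spow, unit, if_neg (by simpa [List.length_eq_zero_iff] using hv)]
  | succ n ih =>
    intro v hv
    rw [spow, shuffle]
    refine Finset.sum_eq_zero fun k hk => Finset.sum_eq_zero fun u hu =>
      Finset.sum_eq_zero fun w hw => ?_
    have hu' := mem_wordsLen.1 hu
    have hw' := mem_wordsLen.1 hw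
    by_cases h1 : u.length = n
    · have hw1 : w.length ≠ 1 := by
        rw [hw']
        rw [Finset.mem_range] at hk
        omega
      rw [letters_eq_zero b hw1]
      ring
    · rw [ih u h1]
      ring

lemma spow_diag (b : Fin d → ℝ) : ∀ (n : ℕ) (v : Word d), v.length = n →
    spow (letters b) n v = (Nat.factorial n : ℝ) * ((v.map b).prod) := by
  intro n
  induction n with
  | zero =>
    intro v hv
    rw [List.length_eq_zero_iff] at hv
    subst hv
    simp [spow, unit]
  | succ n ih =>
    intro v hv
    rw [spow, shuffle, hv]
    rw [Finset.sum_eq_single_of_mem n (Finset.mem_range.2 (by omega))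
      (fun k _ hkn => Finset.sum_eq_zero fun u hu => Finset.sum_eq_zero fun w _ => by
        rw [spow_eq_zero b n u (by rw [mem_wordsLen.1 hu]; exact hkn)]; ring)]
    have hsub : n + 1 - n = 1 := by omega
    rw [hsub]
    calc ∑ u ∈ wordsLen d n, ∑ w ∈ wordsLen d 1,
          spow (letters b) n u * letters b w * ((shuffleW u w).count v : ℝ)
        = ∑ u ∈ wordsLen d n, ∑ i : Fin d,
            (Nat.factorial n : ℝ) * ((u.map b).prod) * b i * ((shuffleW u [i]).count v : ℝ) := by
          refine Finset.sum_congr rfl fun u hu => ?_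
          rw [sum_wordsLen_one]
          refine Finset.sum_congr rfl fun i _ => ?_
          rw [ih u (mem_wordsLen.1 hu), letters_single]
      _ = (Nat.factorial n : ℝ) * ∑ u ∈ wordsLen d n, ∑ i : Fin d,
            ((u.map b).prod) * b i * ((shuffleW u [i]).count v : ℝ) := by
          rw [Finset.mul_sum]
          refine Finset.sum_congr rfl fun u _ => ?_
          rw [Finset.mul_sum]
          exact Finset.sum_congr rfl fun i _ => by ring
      _ = (Nat.factorial n : ℝ) * (((n:ℝ)+1) * ((v.map b).prod)) := by rw [key_sum b v n hv]
      _ = (Nat.factorial (n+1) : ℝ) * ((v.map b).prod) := by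
          rw [Nat.factorial_succ]; push_cast; ring

lemma shuexp_letters (b : Fin d → ℝ) (v : Word d) :
    shuexp (letters b) v = (v.map b).prod := by
  rw [shuexp, tsum_eq_single v.length
    (fun n hn => by rw [spow_eq_zero b n v (Ne.symm hn)]; simp)]
  rw [spow_diag b v.length v rfl]
  field_simp

lemma aux_summable (A K : ℝ) (hA : 0 ≤ A) (hK : 0 ≤ K) :
    Summable (fun n : ℕ => A * K ^ n / Real.sqrt (Nat.factorial (n - 1))) := by
  apply summable_of_ratio_norm_eventually_le (r := 1/2) (by norm_num)
  filter_upwards [Filter.eventually_ge_atTop (⌈(2*K)^2⌉₊ + 1)] with n hn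
  obtain ⟨m, rfl⟩ : ∃ m, n = m + 1 := ⟨n - 1, by omega⟩
  have hm : ((2*K)^2 : ℝ) ≤ ((m:ℝ)+1) := by
    calc ((2*K)^2 : ℝ) ≤ (⌈(2*K)^2⌉₊ : ℝ) := Nat.le_ceil _
      _ ≤ ((m:ℝ)+1) := by
          have : (⌈(2*K)^2⌉₊ : ℕ) ≤ m + 1 := by omega
          exact_mod_cast this
  have hsq : 2*K ≤ Real.sqrt ((m:ℝ)+1) := by
    rw [show (2*K) = Real.sqrt ((2*K)^2) from (Real.sqrt_sq (by positivity)).symm]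
    exact Real.sqrt_le_sqrt hm
  have hfp : (0:ℝ) < (Nat.factorial m : ℝ) := by exact_mod_cast Nat.factorial_pos m
  have hfacpos : (0:ℝ) < Real.sqrt (Nat.factorial m) := Real.sqrt_pos.2 hfp
  simp only [Nat.add_sub_cancel]
  rw [Real.norm_eq_abs, Real.norm_eq_abs, abs_of_nonneg (by positivity),
    abs_of_nonneg (by positivity)]
  have hfact : ((Nat.factorial (m+1) : ℝ)) = ((m:ℝ)+1) * (Nat.factorial m : ℝ) := by
    rw [Nat.factorial_succ]; push_cast; ring
  rw [hfact, Real.sqrt_mul (by positivity)]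
  have hkey : A * K^(m+1+1) / (Real.sqrt ((m:ℝ)+1) * Real.sqrt (Nat.factorial m))
      = (K / Real.sqrt ((m:ℝ)+1)) * (A * K^(m+1) / Real.sqrt (Nat.factorial m)) := by
    have hs1 : Real.sqrt ((m:ℝ)+1) ≠ 0 := by positivity
    field_simp
    ring
  rw [hkey]
  have h2 : K / Real.sqrt ((m:ℝ)+1) ≤ 1/2 := by
    rw [div_le_iff₀ (by positivity)]
    linarith
  exact mul_le_mul_of_nonneg_right h2 (by positivity)

lemma sum_abs_prod (b : Fin d → ℝ) (n : ℕ) :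
    ∑ u ∈ wordsLen d n, |(u.map b).prod| = (∑ i : Fin d, |b i|)^n := by
  rw [sum_wordsLen]
  have h : ∀ f : Fin n → Fin d, |((List.ofFn f).map b).prod| = ∏ j : Fin n, |b (f j)| := by
    intro f
    rw [List.map_ofFn, List.prod_ofFn, Finset.abs_prod]
    rfl
  simp_rw [h]
  symm
  rw [show (∑ i : Fin d, |b i|)^n = ∏ _j : Fin n, ∑ i : Fin d, |b i| by
    simp [Finset.prod_const], Finset.prod_univ_sum]
  simp

end ETA

/-- The dominating function `h_t(v) = C (n+1)^{-1/4} (2t)^{(n+x)/2} / √((n+x-1)!)`,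
where `n` is the length of `v` and `x` the number of occurrences of the distinguished
letter `0` (the time letter), with the convention `m! = 1` for `m ≤ 0`. -/
noncomputable def hfun {d : ℕ} [NeZero d] (C t : ℝ) (v : Word d) : ℝ :=
  C * ((v.length : ℝ) + 1) ^ (-(1/4 : ℝ)) *
    (2 * t) ^ (((v.length + v.count 0 : ℕ) : ℝ) / 2) /
      Real.sqrt (Nat.factorial (v.length + v.count 0 - 1))

lemma hfun_nonneg {d : ℕ} [NeZero d] {C T : ℝ} (hC : 0 ≤ C) (hT : 0 < T) (v : Word d) :
    0 ≤ hfun C T v := by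
  unfold hfun
  have h2T : (0:ℝ) ≤ 2*T := by linarith
  apply div_nonneg _ (Real.sqrt_nonneg _)
  apply mul_nonneg (mul_nonneg hC (by positivity)) (Real.rpow_nonneg h2T _)

lemma hfun_le {d : ℕ} [NeZero d] {C T : ℝ} (hC : 0 ≤ C) (hT : 0 < T) (v : Word d) :
    hfun C T v ≤ C * (max (2*T) 1) ^ v.length / Real.sqrt (Nat.factorial (v.length - 1)) := by
  unfold hfun
  have hM : (1:ℝ) ≤ max (2*T) 1 := le_max_right _ _
  have h2T : (0:ℝ) < 2*T := by linarith
  have hx : v.count 0 ≤ v.length := List.count_le_length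
  have hA : ((v.length:ℝ)+1) ^ (-(1/4:ℝ)) ≤ 1 :=
    Real.rpow_le_one_of_one_le_of_nonpos (le_add_of_nonneg_left (Nat.cast_nonneg _)) (by norm_num)
  have hB : (2*T) ^ (((v.length + v.count 0 : ℕ):ℝ)/2) ≤ (max (2*T) 1) ^ v.length := by
    calc (2*T) ^ (((v.length + v.count 0 : ℕ):ℝ)/2)
        ≤ (max (2*T) 1) ^ (((v.length + v.count 0 : ℕ):ℝ)/2) :=
          Real.rpow_le_rpow (le_of_lt h2T) (le_max_left _ _) (by positivity)
      _ ≤ (max (2*T) 1) ^ ((v.length : ℝ)) := by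
          apply Real.rpow_le_rpow_of_exponent_le hM
          push_cast
          have h : (v.count 0 : ℝ) ≤ (v.length : ℝ) := by exact_mod_cast hx
          linarith
      _ = (max (2*T) 1) ^ v.length := Real.rpow_natCast _ _
  have hS : Real.sqrt (Nat.factorial (v.length - 1))
      ≤ Real.sqrt (Nat.factorial (v.length + v.count 0 - 1)) := by
    apply Real.sqrt_le_sqrt
    exact_mod_cast Nat.factorial_le (Nat.sub_le_sub_right (Nat.le_add_right _ _) 1)
  have hSpos : (0:ℝ) < Real.sqrt (Nat.factorial (v.length - 1)) :=
    Real.sqrt_pos.2 (by exact_mod_cast Nat.factorial_pos _)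
  calc C * ((v.length:ℝ)+1) ^ (-(1/4:ℝ)) * (2*T) ^ (((v.length + v.count 0 : ℕ):ℝ)/2) /
        Real.sqrt (Nat.factorial (v.length + v.count 0 - 1))
      ≤ C * 1 * ((max (2*T) 1) ^ v.length) / Real.sqrt (Nat.factorial (v.length - 1)) := by
        apply div_le_div₀ (by positivity) _ hSpos hS
        apply mul_le_mul _ hB (Real.rpow_nonneg (le_of_lt h2T) _) (by positivity)
        exact mul_le_mul_of_nonneg_left hA hC
    _ = C * (max (2*T) 1) ^ v.length / Real.sqrt (Nat.factorial (v.length - 1)) := by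
        rw [mul_one]

/-- For a linear combination of single letters `b`, the shuffle
exponential `exp^⧢(b)` has finite `A_h`-norm; in particular, for `d = 2` and
`b = a·e_1 + c·e_2`, the corresponding explicit double series converges. -/
theorem shuexp_mem_Ah (d : ℕ) [NeZero d] (C T : ℝ) (hC : 2 ≤ C) (hT : 0 < T)
    (b : Fin d → ℝ) :
    Summable (fun v : Word d => |ETA.shuexp (ETA.letters b) v| * hfun C T v) ∧
    (∀ a c : ℝ, Summable (fun km : ℕ × ℕ =>
      ((Nat.factorial (km.1 + km.2) : ℝ) /
          ((Nat.factorial km.1 : ℝ) * (Nat.factorial km.2 : ℝ))) *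
        |a| ^ km.1 * |c| ^ km.2 *
        (C * ((km.1 + km.2 + 1 : ℕ) : ℝ) ^ (-(1/4 : ℝ)) *
          (2 * T) ^ ((km.1 : ℝ) + (km.2 : ℝ) / 2) /
            Real.sqrt (Nat.factorial (2 * km.1 + km.2 - 1))))) := by
  have hC0 : (0:ℝ) ≤ C := by linarith
  set M := max (2*T) 1 with hMdef
  have hM1 : (1:ℝ) ≤ M := le_max_right _ _
  have hM0 : (0:ℝ) ≤ M := by linarith
  constructor
  · set B := ∑ i : Fin d, |b i| with hBdef
    have hB0 : (0:ℝ) ≤ B := Finset.sum_nonneg fun i _ => abs_nonneg _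
    have hg : Summable (fun n : ℕ => C * (B*M)^n / Real.sqrt (Nat.factorial (n-1))) :=
      ETA.aux_summable C (B*M) hC0 (mul_nonneg hB0 hM0)
    have hfnonneg : ∀ v : Word d, 0 ≤ |ETA.shuexp (ETA.letters b) v| * hfun C T v :=
      fun v => mul_nonneg (abs_nonneg _) (hfun_nonneg hC0 hT v)
    have hlen : ∀ n : ℕ, ∑ v ∈ ETA.wordsLen d n, |ETA.shuexp (ETA.letters b) v| * hfun C T v
        ≤ C * (B*M)^n / Real.sqrt (Nat.factorial (n-1)) := by
      intro n
      calc ∑ v ∈ ETA.wordsLen d n, |ETA.shuexp (ETA.letters b) v| * hfun C T v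
          ≤ ∑ v ∈ ETA.wordsLen d n,
              |(v.map b).prod| * (C * M ^ n / Real.sqrt (Nat.factorial (n-1))) := by
            apply Finset.sum_le_sum
            intro v hv
            rw [ETA.shuexp_letters]
            have hvl := ETA.mem_wordsLen.1 hv
            calc |(v.map b).prod| * hfun C T v
                ≤ |(v.map b).prod| * (C * M ^ v.length / Real.sqrt (Nat.factorial (v.length-1))) :=
                  mul_le_mul_of_nonneg_left (hfun_le hC0 hT v) (abs_nonneg _)
              _ = |(v.map b).prod| * (C * M ^ n / Real.sqrt (Nat.factorial (n-1))) := by rw [hvl]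
        _ = B^n * (C * M ^ n / Real.sqrt (Nat.factorial (n-1))) := by
            rw [← Finset.sum_mul, ETA.sum_abs_prod]
        _ = C * (B*M)^n / Real.sqrt (Nat.factorial (n-1)) := by
            rw [mul_pow]
            ring
    apply summable_of_sum_le hfnonneg
    intro s
    have hsub : s ⊆ (Finset.range (s.sup List.length + 1)).biUnion (fun n => ETA.wordsLen d n) := by
      intro v hv
      refine Finset.mem_biUnion.2 ⟨v.length, Finset.mem_range.2 ?_, ETA.mem_wordsLen.2 rfl⟩
      exact Nat.lt_succ_of_le (Finset.le_sup hv)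
    calc ∑ v ∈ s, |ETA.shuexp (ETA.letters b) v| * hfun C T v
        ≤ ∑ v ∈ (Finset.range (s.sup List.length + 1)).biUnion (fun n => ETA.wordsLen d n),
            |ETA.shuexp (ETA.letters b) v| * hfun C T v :=
          Finset.sum_le_sum_of_subset_of_nonneg hsub (fun v _ _ => hfnonneg v)
      _ = ∑ n ∈ Finset.range (s.sup List.length + 1), ∑ v ∈ ETA.wordsLen d n,
            |ETA.shuexp (ETA.letters b) v| * hfun C T v := by
          apply Finset.sum_biUnion
          intro m _ n _ hmn
          apply Finset.disjoint_left.2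
          intro v hv hv'
          exact hmn (by rw [← ETA.mem_wordsLen.1 hv, ETA.mem_wordsLen.1 hv'])
      _ ≤ ∑ n ∈ Finset.range (s.sup List.length + 1),
            C * (B*M)^n / Real.sqrt (Nat.factorial (n-1)) :=
          Finset.sum_le_sum fun n _ => hlen n
      _ ≤ ∑' n, C * (B*M)^n / Real.sqrt (Nat.factorial (n-1)) :=
          Summable.sum_le_tsum _ (fun n _ => by positivity) hg
  · intro a c
    have hF : Summable (fun k : ℕ => C * (2 * |a| * M)^k / Real.sqrt (Nat.factorial (k-1))) :=
      ETA.aux_summable C _ hC0 (mul_nonneg (by positivity) hM0)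
    have hG : Summable (fun m : ℕ => 1 * (2 * |c| * M)^m / Real.sqrt (Nat.factorial (m-1))) :=
      ETA.aux_summable 1 _ zero_le_one (mul_nonneg (by positivity) hM0)
    have hFG :=
      hF.mul_of_nonneg hG
        (Pi.le_def.2 fun k => div_nonneg
          (mul_nonneg hC0 (pow_nonneg (mul_nonneg (by positivity) hM0) _)) (Real.sqrt_nonneg _))
        (Pi.le_def.2 fun m => div_nonneg
          (mul_nonneg zero_le_one (pow_nonneg (mul_nonneg (by positivity) hM0) _)) (Real.sqrt_nonneg _))
    apply Summable.of_nonneg_of_le _ _ hFG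
    · intro km
      have h2T : (0:ℝ) ≤ 2*T := by linarith
      apply mul_nonneg
      apply mul_nonneg
      apply mul_nonneg
      · positivity
      · positivity
      · positivity
      apply div_nonneg _ (Real.sqrt_nonneg _)
      exact mul_nonneg (mul_nonneg hC0 (by positivity)) (Real.rpow_nonneg h2T _)
    · rintro ⟨k, m⟩
      simp only
      have h2T : (0:ℝ) < 2*T := by linarith
      have hsk : (0:ℝ) < Real.sqrt (Nat.factorial (k-1)) :=
        Real.sqrt_pos.2 (by exact_mod_cast Nat.factorial_pos _)
      have hsm : (0:ℝ) < Real.sqrt (Nat.factorial (m-1)) :=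
        Real.sqrt_pos.2 (by exact_mod_cast Nat.factorial_pos _)
      have hQ : ((Nat.factorial (k + m) : ℝ) / ((Nat.factorial k : ℝ) * (Nat.factorial m : ℝ)))
          = (Nat.choose (k+m) k : ℝ) := by
        have h := Nat.choose_mul_factorial_mul_factorial (Nat.le_add_right k m)
        rw [Nat.add_sub_cancel_left] at h
        have h' : ((Nat.factorial (k+m) : ℝ))
            = (Nat.choose (k+m) k : ℝ) * (Nat.factorial k : ℝ) * (Nat.factorial m : ℝ) := by
          exact_mod_cast h.symm
        rw [h']
        field_simp
      have hQ2 : ((Nat.choose (k+m) k : ℝ)) ≤ 2^(k+m) := by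
        have h := Finset.single_le_sum (f := fun i => Nat.choose (k+m) i)
          (fun i _ => Nat.zero_le _) (Finset.mem_range.2 (Nat.lt_succ_of_le (Nat.le_add_right k m)))
        rw [Nat.sum_range_choose] at h
        exact_mod_cast h
      have hA1 : (((k + m + 1 : ℕ)):ℝ) ^ (-(1/4:ℝ)) ≤ 1 :=
        Real.rpow_le_one_of_one_le_of_nonpos (by exact_mod_cast Nat.one_le_iff_ne_zero.2 (by omega)) (by norm_num)
      have hB : (2*T) ^ ((k:ℝ) + (m:ℝ)/2) ≤ M ^ ((k+m : ℕ) : ℝ) := by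
        calc (2*T) ^ ((k:ℝ) + (m:ℝ)/2) ≤ M ^ ((k:ℝ) + (m:ℝ)/2) :=
            Real.rpow_le_rpow (le_of_lt h2T) (le_max_left _ _) (by positivity)
          _ ≤ M ^ ((k+m : ℕ) : ℝ) := by
            apply Real.rpow_le_rpow_of_exponent_le hM1
            push_cast
            have : (0:ℝ) ≤ (m:ℝ) := Nat.cast_nonneg m
            linarith
      have hS : Real.sqrt (Nat.factorial (k-1)) * Real.sqrt (Nat.factorial (m-1))
          ≤ Real.sqrt (Nat.factorial (2*k+m-1)) := by
        rw [← Real.sqrt_mul (by positivity)]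
        apply Real.sqrt_le_sqrt
        have h1 : Nat.factorial (k-1) * Nat.factorial (m-1) ≤ Nat.factorial ((k-1)+(m-1)) :=
          Nat.le_of_dvd (Nat.factorial_pos _) (Nat.factorial_mul_factorial_dvd_factorial_add _ _)
        have h2 : Nat.factorial ((k-1)+(m-1)) ≤ Nat.factorial (2*k+m-1) :=
          Nat.factorial_le (by omega)
        exact_mod_cast le_trans h1 h2
      rw [hQ]
      calc (Nat.choose (k+m) k : ℝ) * |a| ^ k * |c| ^ m *
            (C * (((k + m + 1 : ℕ)):ℝ) ^ (-(1/4:ℝ)) * (2*T) ^ ((k:ℝ) + (m:ℝ)/2) /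
              Real.sqrt (Nat.factorial (2*k+m-1)))
          ≤ (2:ℝ)^(k+m) * |a| ^ k * |c| ^ m *
            (C * 1 * (M ^ ((k+m : ℕ) : ℝ)) /
              (Real.sqrt (Nat.factorial (k-1)) * Real.sqrt (Nat.factorial (m-1)))) := by
            gcongr
        _ = (C * (2 * |a| * M)^k / Real.sqrt (Nat.factorial (k-1))) *
            (1 * (2 * |c| * M)^m / Real.sqrt (Nat.factorial (m-1))) := by
            rw [Real.rpow_natCast, mul_pow, mul_pow, mul_pow, mul_pow, pow_add, pow_add]
            field_simp
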